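/- Let c0, c1, c3 be real numbers, set c2 = c1, and define f(u) = u(1−u), g(u) = (c3−2c1+c0)u² + (2c1−2c0)u + c0, F(a,b,c,d) = a(1−b)·[(1−d)(c0(1−c) + c1·c) + d(c1(1−c) + c3·c)], D(v) = c0(1−v)² + 2c1·v(1−v) + c3·v², and D'(v) = −2c0(1−v) + 2c1(1−2v) + 2c3·v. Let ρ⁺, ρ⁻ : ℝ → ℝ be differentiable on a neighborhood of a point x and twice differentiable at x. Then lim_{h→0, h≠0} (1/h)·{ (1/h)·[ F(ρ⁺(x), ρ⁺(x+h), ρ⁻(x), ρ⁻(x+h)) − F(ρ⁺(x−h), ρ⁺(x), ρ⁻(x−h), ρ⁻(x)) ] − [ f'(ρ⁺(x))g(ρ⁻(x))(ρ⁺)'(x) + f(ρ⁺(x))g'(ρ⁻(x))(ρ⁻)'(x) ] } = −(1/2)·[ D(ρ⁻(x))·(ρ⁺)''(x) + D'(ρ⁻(x))·(ρ⁻)'(x)·(ρ⁺)'(x) ]. That is, the next-order term in the small-cell-size expansion of the mesoscopic flux difference is the nonlinear diffusion −(h/2)·∂ₓ( D(ρ⁻) ∂ₓρ⁺ ). -/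

import Mathlib

open Filter Topology

/-- Second-order Taylor quotient limit: forward version. -/
lemma taylor_quot (u du : ℝ → ℝ) (x : ℝ) (s : Set ℝ) (hs : s ∈ 𝓝 x) (d2 : ℝ)
    (hu : ∀ y ∈ s, HasDerivAt u (du y) y) (hdu : HasDerivAt du d2 x) :
    Tendsto (fun h : ℝ => (u (x + h) - u x - h * du x) / h ^ 2)
      (𝓝[≠] (0 : ℝ)) (𝓝 (d2 / 2)) := by
  have hx : x ∈ s := mem_of_mem_nhds hs
  have t1 : Tendsto (fun h : ℝ => x + h) (𝓝 0) (𝓝 x) := by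
    simpa using (continuous_add_left x).tendsto (0 : ℝ)
  have hmem : ∀ᶠ h : ℝ in 𝓝 (0 : ℝ), x + h ∈ s := t1.eventually_mem hs
  apply HasDerivAt.lhopital_zero_nhdsNE (f' := fun h : ℝ => du (x + h) - du x)
    (g' := fun h : ℝ => 2 * h)
  · filter_upwards [hmem.filter_mono nhdsWithin_le_nhds] with h hh
    have h1 : HasDerivAt (fun t : ℝ => u (x + t)) (du (x + h)) h := by
      simpa [Function.comp_def] using (hu _ hh).comp h ((hasDerivAt_id h).const_add x)
    exact (h1.sub_const (u x)).sub (hasDerivAt_mul_const (du x))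
  · filter_upwards with h
    simpa using hasDerivAt_pow 2 h
  · filter_upwards [self_mem_nhdsWithin] with h (hh : h ≠ (0:ℝ))
    exact mul_ne_zero two_ne_zero hh
  · have hc : Tendsto (fun h : ℝ => u (x + h) - u x - h * du x) (𝓝 0)
        (𝓝 (u x - u x - 0 * du x)) :=
      (((hu x hx).continuousAt.tendsto.comp t1).sub tendsto_const_nhds).sub
        (tendsto_id.mul_const (du x))
    simpa using hc.mono_left nhdsWithin_le_nhds
  · have : Tendsto (fun h : ℝ => h ^ 2) (𝓝 (0:ℝ)) (𝓝 0) := by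
      simpa using ((continuous_pow 2).tendsto (0 : ℝ))
    exact this.mono_left nhdsWithin_le_nhds
  · have hslope : Tendsto (slope du x) (𝓝[≠] x) (𝓝 d2) :=
      hasDerivAt_iff_tendsto_slope.mp hdu
    have hshift : Tendsto (fun h : ℝ => x + h) (𝓝[≠] (0:ℝ)) (𝓝[≠] x) := by
      refine tendsto_nhdsWithin_of_tendsto_nhds_of_eventually_within _
        (t1.mono_left nhdsWithin_le_nhds) ?_
      filter_upwards [self_mem_nhdsWithin] with h (hh : h ≠ (0:ℝ))
      simp only [Set.mem_compl_iff, Set.mem_singleton_iff]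
      intro habs
      exact hh (by linarith)
    have H := (hslope.comp hshift).div_const 2
    refine H.congr fun h => ?_
    simp only [Function.comp, slope_def_field]
    rw [div_div, mul_comm]
    congr 1
    ring_nf

/-- Second-order Taylor quotient limit: backward version. -/
lemma taylor_quot_neg (u du : ℝ → ℝ) (x : ℝ) (s : Set ℝ) (hs : s ∈ 𝓝 x) (d2 : ℝ)
    (hu : ∀ y ∈ s, HasDerivAt u (du y) y) (hdu : HasDerivAt du d2 x) :
    Tendsto (fun h : ℝ => (u x - u (x - h) - h * du x) / h ^ 2)
      (𝓝[≠] (0 : ℝ)) (𝓝 (-(d2 / 2))) := by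
  have hneg : Tendsto (fun h : ℝ => -h) (𝓝[≠] (0:ℝ)) (𝓝[≠] (0:ℝ)) := by
    refine tendsto_nhdsWithin_of_tendsto_nhds_of_eventually_within _
      ((continuous_neg.tendsto (0:ℝ)).mono_left nhdsWithin_le_nhds |>.congr' (by
        filter_upwards with h; rfl) |>.mono_right (by simp)) ?_
    · filter_upwards [self_mem_nhdsWithin] with h (hh : h ≠ (0:ℝ))
      simpa using hh
  have H := ((taylor_quot u du x s hs d2 hu hdu).comp hneg).neg
  refine H.congr fun h => ?_
  simp only [Function.comp]
  rw [neg_sq, ← sub_eq_add_neg, ← neg_div]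
  ring_nf


/-- Discrete flux of right-moving pedestrians of the mesoscopic model with
slowdown velocities `c0, c1, c2 = c1, c3`. -/
noncomputable def pedFluxSym (c0 c1 c3 a b c d : ℝ) : ℝ :=
  a * (1 - b) * ((1 - d) * (c0 * (1 - c) + c1 * c) + d * (c1 * (1 - c) + c3 * c))

/-- `f(u) = u(1−u)`, the density factor of the macroscopic pedestrian flux. -/
noncomputable def pedF (u : ℝ) : ℝ := u * (1 - u)

/-- `g(u) = (c3−2c1+c0)u² + (2c1−2c0)u + c0`, the velocity factor of the
macroscopic pedestrian flux when `c2 = c1`. -/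
noncomputable def pedGSym (c0 c1 c3 u : ℝ) : ℝ :=
  (c3 - 2 * c1 + c0) * u ^ 2 + (2 * c1 - 2 * c0) * u + c0

/-- `D(v) = c0(1−v)² + 2c1·v(1−v) + c3·v²`, the nonlinear diffusion coefficient. -/
noncomputable def pedD (c0 c1 c3 v : ℝ) : ℝ :=
  c0 * (1 - v) ^ 2 + 2 * c1 * v * (1 - v) + c3 * v ^ 2

/-- `D'(v) = −2c0(1−v) + 2c1(1−2v) + 2c3·v`, the derivative of the diffusion
coefficient. -/
noncomputable def pedD' (c0 c1 c3 v : ℝ) : ℝ :=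
  -2 * c0 * (1 - v) + 2 * c1 * (1 - 2 * v) + 2 * c3 * v

/-- The next-order term in the small-cell-size expansion of the mesoscopic flux
difference is the nonlinear diffusion `−(h/2)·∂ₓ(D(ρ⁻)∂ₓρ⁺)`: subtracting the
first-order (macroscopic convective) term from the scaled flux difference and
dividing again by `h`, the limit as `h → 0` is
`−(1/2)·[D(ρ⁻(x))(ρ⁺)''(x) + D'(ρ⁻(x))(ρ⁻)'(x)(ρ⁺)'(x)]`. -/
theorem flux_difference_second_order_diffusive_correction
    (c0 c1 c3 : ℝ) (ρp ρm : ℝ → ℝ) (x : ℝ)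
    (s : Set ℝ) (hs : s ∈ 𝓝 x) (dp dm : ℝ → ℝ) (dp2 dm2 : ℝ)
    (hρp : ∀ y ∈ s, HasDerivAt ρp (dp y) y)
    (hρm : ∀ y ∈ s, HasDerivAt ρm (dm y) y)
    (hdp : HasDerivAt dp dp2 x) (hdm : HasDerivAt dm dm2 x) :
    Tendsto (fun h : ℝ =>
        ((pedFluxSym c0 c1 c3 (ρp x) (ρp (x + h)) (ρm x) (ρm (x + h))
          - pedFluxSym c0 c1 c3 (ρp (x - h)) (ρp x) (ρm (x - h)) (ρm x)) / h
         - ((1 - 2 * ρp x) * pedGSym c0 c1 c3 (ρm x) * dp x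
            + pedF (ρp x) * (2 * (c3 - 2 * c1 + c0) * ρm x + (2 * c1 - 2 * c0)) * dm x)) / h)
      (𝓝[≠] (0 : ℝ))
      (𝓝 (-(1 / 2) * (pedD c0 c1 c3 (ρm x) * dp2
          + pedD' c0 c1 c3 (ρm x) * dm x * dp x))) := by
  set G : ℝ := (c3 - 2 * c1 + c0) * (ρm x) ^ 2 + (2 * c1 - 2 * c0) * (ρm x) + c0 with hG
  set E : ℝ := (c1 - c0) * (1 - ρm x) + (c3 - c1) * (ρm x) with hE
  have hq1 := taylor_quot ρp dp x s hs dp2 hρp hdp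
  have hq2 := taylor_quot_neg ρp dp x s hs dp2 hρp hdp
  have hq3 := taylor_quot ρm dm x s hs dm2 hρm hdm
  have hq4 := taylor_quot_neg ρm dm x s hs dm2 hρm hdm
  have hid : Tendsto (fun h : ℝ => h) (𝓝[≠] (0:ℝ)) (𝓝 0) :=
    tendsto_id.mono_left nhdsWithin_le_nhds
  have hT : Tendsto (fun h : ℝ =>
      (-(ρp x * G)) * ((ρp (x + h) - ρp x - h * dp x) / h ^ 2)
      + ((1 - ρp x) * G) * ((ρp x - ρp (x - h) - h * dp x) / h ^ 2)
      + (ρp x * (1 - ρp x) * E) * ((ρm (x + h) - ρm x - h * dm x) / h ^ 2)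
      + (ρp x * (1 - ρp x) * E) * ((ρm x - ρm (x - h) - h * dm x) / h ^ 2)
      + ((dp x + h * ((ρp (x + h) - ρp x - h * dp x) / h ^ 2))
          * (dm x + h * ((ρm (x + h) - ρm x - h * dm x) / h ^ 2)) * (-(ρp x * E))
        - (dp x + h * ((ρp x - ρp (x - h) - h * dp x) / h ^ 2))
          * (dm x + h * ((ρm x - ρm (x - h) - h * dm x) / h ^ 2)) * ((1 - ρp x) * E)))
      (𝓝[≠] (0:ℝ))
      (𝓝 ((-(ρp x * G)) * (dp2 / 2) + ((1 - ρp x) * G) * (-(dp2 / 2))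
        + (ρp x * (1 - ρp x) * E) * (dm2 / 2) + (ρp x * (1 - ρp x) * E) * (-(dm2 / 2))
        + ((dp x + 0 * (dp2 / 2)) * (dm x + 0 * (dm2 / 2)) * (-(ρp x * E))
          - (dp x + 0 * (-(dp2 / 2))) * (dm x + 0 * (-(dm2 / 2))) * ((1 - ρp x) * E)))) :=
    ((((hq1.const_mul _).add (hq2.const_mul _)).add (hq3.const_mul _)).add
      (hq4.const_mul _)).add
      ((((tendsto_const_nhds.add (hid.mul hq1)).mul
          (tendsto_const_nhds.add (hid.mul hq3))).mul_const _).sub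
        (((tendsto_const_nhds.add (hid.mul hq2)).mul
          (tendsto_const_nhds.add (hid.mul hq4))).mul_const _))
  have hval : ((-(ρp x * G)) * (dp2 / 2) + ((1 - ρp x) * G) * (-(dp2 / 2))
        + (ρp x * (1 - ρp x) * E) * (dm2 / 2) + (ρp x * (1 - ρp x) * E) * (-(dm2 / 2))
        + ((dp x + 0 * (dp2 / 2)) * (dm x + 0 * (dm2 / 2)) * (-(ρp x * E))
          - (dp x + 0 * (-(dp2 / 2))) * (dm x + 0 * (-(dm2 / 2))) * ((1 - ρp x) * E)))
      = -(1 / 2) * (pedD c0 c1 c3 (ρm x) * dp2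
          + pedD' c0 c1 c3 (ρm x) * dm x * dp x) := by
    simp only [hG, hE, pedD, pedD']
    ring
  rw [← hval]
  refine Tendsto.congr' ?_ hT
  filter_upwards [self_mem_nhdsWithin] with h (hh : h ≠ (0:ℝ))
  simp only [hG, hE, pedFluxSym, pedF, pedGSym]
  field_simp
  ring
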